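/- Let Ω = (a_x, b_x) × (a_y, b_y) be a (possibly unbounded) open rectangle in ℝ² and let u ∈ L^1(Ω) ∩ BV(Ω). Define v(x) = ∫_{a_y}^{b_y} u(x,y) dy for a.e. x ∈ (a_x, b_x). Then v ∈ L^1(a_x, b_x) ∩ BV(a_x, b_x), and TV(v, (a_x,b_x)) ≤ ∫_{a_y}^{b_y} TV(u(·,y), (a_x,b_x)) dy ≤ TV(u, Ω). -/

import Mathlib

open MeasureTheory Set Filter Topology Manifold
open scoped ENNReal


/-- The divergence of a vector field `ψ : ℝ² → ℝ²`. -/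
noncomputable def div2 (ψ : ℝ × ℝ → ℝ × ℝ) (p : ℝ × ℝ) : ℝ :=
  (fderiv ℝ ψ p ((1 : ℝ), (0 : ℝ))).1 + (fderiv ℝ ψ p ((0 : ℝ), (1 : ℝ))).2

/-- Admissible test vector field for the 2D total variation on `Ω`. -/
def IsTestVF (Ω : Set (ℝ × ℝ)) (ψ : ℝ × ℝ → ℝ × ℝ) : Prop :=
  ContDiff ℝ 1 ψ ∧ HasCompactSupport ψ ∧ tsupport ψ ⊆ Ω ∧ ∀ p, ‖ψ p‖ ≤ 1

/-- The total variation of `u` over `Ω ⊆ ℝ²`. -/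
noncomputable def TV2 (u : ℝ × ℝ → ℝ) (Ω : Set (ℝ × ℝ)) : ℝ :=
  sSup {r : ℝ | ∃ ψ, IsTestVF Ω ψ ∧ r = ∫ p in Ω, u p * div2 ψ p}

/-- `u` has bounded variation on `Ω ⊆ ℝ²`. -/
def BV2 (u : ℝ × ℝ → ℝ) (Ω : Set (ℝ × ℝ)) : Prop :=
  BddAbove {r : ℝ | ∃ ψ, IsTestVF Ω ψ ∧ r = ∫ p in Ω, u p * div2 ψ p}

/-- The total variation of `u : ℝ → ℝ` over the interval `(a, b)`. -/
noncomputable def TV1 (u : ℝ → ℝ) (a b : ℝ) : ℝ :=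
  sSup {r : ℝ | ∃ ψ : ℝ → ℝ, ContDiff ℝ 1 ψ ∧ HasCompactSupport ψ ∧
    tsupport ψ ⊆ Ioo a b ∧ (∀ x, |ψ x| ≤ 1) ∧ r = ∫ x in Ioo a b, u x * deriv ψ x}

/-- `u : ℝ → ℝ` has bounded variation on `(a, b)`. -/
def BV1 (u : ℝ → ℝ) (a b : ℝ) : Prop :=
  BddAbove {r : ℝ | ∃ ψ : ℝ → ℝ, ContDiff ℝ 1 ψ ∧ HasCompactSupport ψ ∧
    tsupport ψ ⊆ Ioo a b ∧ (∀ x, |ψ x| ≤ 1) ∧ r = ∫ x in Ioo a b, u x * deriv ψ x}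

namespace StmtAux


/-- Admissible 1D test function for `TV1` on `(a,b)`. -/
def Adm (a b : ℝ) (ψ : ℝ → ℝ) : Prop :=
  ContDiff ℝ 1 ψ ∧ HasCompactSupport ψ ∧ tsupport ψ ⊆ Set.Ioo a b ∧ ∀ x, |ψ x| ≤ 1

lemma adm_zero (a b : ℝ) : Adm a b (fun _ => (0:ℝ)) := by
  refine ⟨contDiff_const, ?_, ?_, fun x => by simp⟩
  · have : tsupport (fun _ : ℝ => (0:ℝ)) = ∅ := by
      simp [tsupport, Function.support]
    rw [HasCompactSupport, this]; exact isCompact_empty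
  · have : tsupport (fun _ : ℝ => (0:ℝ)) = ∅ := by
      simp [tsupport, Function.support]
    rw [this]; exact empty_subset _

lemma deriv_zero_outside {a b : ℝ} {ψ : ℝ → ℝ} (h : Adm a b ψ) {x : ℝ}
    (hx : x ∉ Set.Icc a b) : deriv ψ x = 0 := by
  have hsub : Function.support (deriv ψ) ⊆ Set.Icc a b :=
    (support_deriv_subset.trans h.2.2.1).trans Ioo_subset_Icc_self
  by_contra hne
  exact hx (hsub hne)

lemma adm_deriv_cont {a b : ℝ} {ψ : ℝ → ℝ} (h : Adm a b ψ) : Continuous (deriv ψ) :=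
  h.1.continuous_deriv le_rfl

lemma adm_deriv_bound {a b : ℝ} {ψ : ℝ → ℝ} (h : Adm a b ψ) :
    ∃ C : ℝ, 0 ≤ C ∧ ∀ x, |deriv ψ x| ≤ C := by
  obtain ⟨C, hC⟩ := (h.2.1.deriv).exists_bound_of_continuous (adm_deriv_cont h)
  refine ⟨max C 0, le_max_right _ _, fun x => le_trans ?_ (le_max_left _ _)⟩
  simpa [Real.norm_eq_abs] using hC x

/-- The set whose supremum is `TV1 u a b`. -/
def TVset (u : ℝ → ℝ) (a b : ℝ) : Set ℝ :=
  {r : ℝ | ∃ ψ : ℝ → ℝ, Adm a b ψ ∧ r = ∫ x in Set.Ioo a b, u x * deriv ψ x}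

lemma TVset_eq (u : ℝ → ℝ) (a b : ℝ) :
    {r : ℝ | ∃ ψ : ℝ → ℝ, ContDiff ℝ 1 ψ ∧ HasCompactSupport ψ ∧
      tsupport ψ ⊆ Set.Ioo a b ∧ (∀ x, |ψ x| ≤ 1) ∧ r = ∫ x in Set.Ioo a b, u x * deriv ψ x}
      = TVset u a b := by
  ext r
  constructor
  · rintro ⟨ψ, h1, h2, h3, h4, h5⟩; exact ⟨ψ, ⟨h1, h2, h3, h4⟩, h5⟩
  · rintro ⟨ψ, ⟨h1, h2, h3, h4⟩, h5⟩; exact ⟨ψ, h1, h2, h3, h4, h5⟩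

lemma zero_mem_TVset (u : ℝ → ℝ) (a b : ℝ) : (0:ℝ) ∈ TVset u a b := by
  refine ⟨fun _ => 0, adm_zero a b, ?_⟩
  simp [deriv_const]

/-- Smooth cutoff: compact `K` inside open `V`. -/
lemma exists_cutoff {K V : Set ℝ} (hK : IsCompact K) (hV : IsOpen V) (hKV : K ⊆ V) :
    ∃ η : ℝ → ℝ, ContDiff ℝ 1 η ∧ HasCompactSupport η ∧ tsupport η ⊆ V ∧
      Set.EqOn η 1 K ∧ ∀ y, η y ∈ Set.Icc (0:ℝ) 1 := by
  obtain ⟨L, hL, hKL, hLV⟩ := exists_compact_between hK hV hKV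
  obtain ⟨f, hf0, hf1, hf01⟩ :=
    exists_contMDiffMap_zero_one_of_isClosed (𝓘(ℝ, ℝ)) (n := ⊤) (isClosed_compl_iff.mpr isOpen_interior)
      hK.isClosed (disjoint_left.mpr fun y hy hyK => hy (hKL hyK))
  have hsupp : tsupport f ⊆ L := by
    have h1 : Function.support f ⊆ interior L := by
      intro y hy
      by_contra hyn
      exact hy (hf0 hyn)
    exact (closure_mono h1).trans (hL.isClosed.closure_subset_iff.mpr interior_subset)
  have hcd : ContDiff ℝ 1 (f : ℝ → ℝ) := by
    have := f.contMDiff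
    rw [contMDiff_iff_contDiff] at this
    exact this.of_le (by exact_mod_cast le_top)
  refine ⟨f, hcd, ?_, hsupp.trans hLV, hf1, hf01⟩
  exact HasCompactSupport.intro hL fun y hy => by
    by_contra hne
    exact hy (hsupp (subset_tsupport _ hne))


lemma exists_dense_seq (a b : ℝ) :
    ∃ e : ℕ → (ℝ → ℝ), (∀ n, Adm a b (e n)) ∧ (e 0 = fun _ => 0) ∧
      ∀ ψ, Adm a b ψ → ∀ ε : ℝ, 0 < ε → ∃ n, ∀ x, |deriv ψ x - deriv (e n) x| ≤ ε := by
  classical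
  set K := Set.Icc a b with hK
  set S : Set C(K, ℝ) := {F | ∃ ψ : ℝ → ℝ, Adm a b ψ ∧ ∀ x : K, F x = deriv ψ x} with hS
  have h0S : (0 : C(K, ℝ)) ∈ S := by
    refine ⟨fun _ => 0, adm_zero a b, fun x => ?_⟩
    simp [deriv_const]
  haveI : Nonempty ↥S := ⟨⟨0, h0S⟩⟩
  obtain ⟨Q, hQc, hQd⟩ := TopologicalSpace.exists_countable_dense (↥S)
  have hQne : Q.Nonempty := hQd.nonempty
  obtain ⟨f, hfQ⟩ := hQc.exists_eq_range hQne
  have hmem : ∀ m : ℕ, (f m : C(K, ℝ)) ∈ S := fun m => (f m).2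
  choose e' he'adm he'eq using hmem
  refine ⟨fun n => Nat.rec (fun _ => (0:ℝ)) (fun k _ => e' k) n, ?_, rfl, ?_⟩
  · intro n
    cases n with
    | zero => exact adm_zero a b
    | succ m => exact he'adm m
  · intro ψ hψ ε hε
    set Fψ : C(K, ℝ) := ⟨fun x => deriv ψ x, (adm_deriv_cont hψ).comp continuous_subtype_val⟩
      with hFψ
    have hFψS : Fψ ∈ S := ⟨ψ, hψ, fun x => rfl⟩
    obtain ⟨q, hqball, hqQ⟩ := Metric.dense_iff.mp hQd ⟨Fψ, hFψS⟩ ε hε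
    obtain ⟨m, hm⟩ : ∃ m, f m = q := by
      rw [hfQ] at hqQ; exact hqQ
    refine ⟨m + 1, fun x => ?_⟩
    by_cases hx : x ∈ K
    · have h1 : deriv ψ x = Fψ ⟨x, hx⟩ := rfl
      have h2 : deriv (e' m) x = (f m : C(K, ℝ)) ⟨x, hx⟩ := (he'eq m ⟨x, hx⟩).symm
      have h3 : dist ((⟨Fψ, hFψS⟩ : ↥S)) q < ε := by
        rw [Metric.mem_ball] at hqball
        rwa [dist_comm] at hqball
      have h4 : dist Fψ (f m : C(K, ℝ)) < ε := by
        rw [hm]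
        simpa [Subtype.dist_eq] using h3
      have h5 : dist (Fψ ⟨x, hx⟩) ((f m : C(K, ℝ)) ⟨x, hx⟩) ≤ dist Fψ (f m : C(K, ℝ)) :=
        ContinuousMap.dist_apply_le_dist _
      have := h5.trans h4.le
      rw [Real.dist_eq] at this
      simpa [h1, h2] using this
    · have h1 : deriv ψ x = 0 := deriv_zero_outside hψ hx
      have h2 : deriv (e' m) x = 0 := deriv_zero_outside (he'adm m) hx
      simp [h1, h2, hε.le]

lemma contDiff_sum_prod (s : Finset ℕ) (ψ η : ℕ → ℝ → ℝ)
    (hψ : ∀ n ∈ s, ContDiff ℝ 1 (ψ n)) (hη : ∀ n ∈ s, ContDiff ℝ 1 (η n)) :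
    ContDiff ℝ 1 (fun q : ℝ × ℝ => (∑ n ∈ s, ψ n q.1 * η n q.2, (0:ℝ))) := by
  refine ContDiff.prodMk ?_ contDiff_const
  exact ContDiff.sum fun n hn => ((hψ n hn).comp contDiff_fst).mul ((hη n hn).comp contDiff_snd)

lemma hasFDerivAt_term (ψ η : ℝ → ℝ) (hψ : ContDiff ℝ 1 ψ) (hη : ContDiff ℝ 1 η) (p : ℝ × ℝ) :
    HasFDerivAt (fun q : ℝ × ℝ => ψ q.1 * η q.2)
      ((ψ p.1 • ((deriv η p.2) • ContinuousLinearMap.snd ℝ ℝ ℝ))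
        + (η p.2 • ((deriv ψ p.1) • ContinuousLinearMap.fst ℝ ℝ ℝ))) p := by
  have h1 : HasFDerivAt (fun q : ℝ × ℝ => ψ q.1)
      ((deriv ψ p.1) • ContinuousLinearMap.fst ℝ ℝ ℝ) p := by
    have hd : HasDerivAt ψ (deriv ψ p.1) p.1 :=
      ((hψ.differentiable one_ne_zero) p.1).hasDerivAt
    have hf : HasFDerivAt (Prod.fst : ℝ × ℝ → ℝ) (ContinuousLinearMap.fst ℝ ℝ ℝ) p :=
      hasFDerivAt_fst
    have := hd.comp_hasFDerivAt p hf
    exact this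
  have h2 : HasFDerivAt (fun q : ℝ × ℝ => η q.2)
      ((deriv η p.2) • ContinuousLinearMap.snd ℝ ℝ ℝ) p := by
    have hd : HasDerivAt η (deriv η p.2) p.2 :=
      ((hη.differentiable one_ne_zero) p.2).hasDerivAt
    have hf : HasFDerivAt (Prod.snd : ℝ × ℝ → ℝ) (ContinuousLinearMap.snd ℝ ℝ ℝ) p :=
      hasFDerivAt_snd
    have := hd.comp_hasFDerivAt p hf
    exact this
  exact h1.mul h2

lemma div2_sum_prod (s : Finset ℕ) (ψ η : ℕ → ℝ → ℝ)
    (hψ : ∀ n ∈ s, ContDiff ℝ 1 (ψ n)) (hη : ∀ n ∈ s, ContDiff ℝ 1 (η n)) (p : ℝ × ℝ) :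
    div2 (fun q : ℝ × ℝ => (∑ n ∈ s, ψ n q.1 * η n q.2, (0:ℝ))) p
      = ∑ n ∈ s, deriv (ψ n) p.1 * η n p.2 := by
  have hw : HasFDerivAt (fun q : ℝ × ℝ => ∑ n ∈ s, ψ n q.1 * η n q.2)
      (∑ n ∈ s, ((ψ n p.1 • ((deriv (η n) p.2) • ContinuousLinearMap.snd ℝ ℝ ℝ))
        + (η n p.2 • ((deriv (ψ n) p.1) • ContinuousLinearMap.fst ℝ ℝ ℝ)))) p :=
    HasFDerivAt.fun_sum fun n hn => hasFDerivAt_term (ψ n) (η n) (hψ n hn) (hη n hn) p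
  have hΨ : HasFDerivAt (fun q : ℝ × ℝ => (∑ n ∈ s, ψ n q.1 * η n q.2, (0:ℝ)))
      ((∑ n ∈ s, ((ψ n p.1 • ((deriv (η n) p.2) • ContinuousLinearMap.snd ℝ ℝ ℝ))
        + (η n p.2 • ((deriv (ψ n) p.1) • ContinuousLinearMap.fst ℝ ℝ ℝ)))).prod 0) p :=
    hw.prodMk (hasFDerivAt_const _ _)
  rw [div2, hΨ.fderiv]
  simp [ContinuousLinearMap.prod_apply, ContinuousLinearMap.sum_apply,
    ContinuousLinearMap.smul_apply, mul_comm]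


lemma le_add_of_forall_pos {a b : ℝ} (h : ∀ ε : ℝ, 0 < ε → a ≤ b + ε) : a ≤ b := by
  by_contra hlt
  push_neg at hlt
  have := h ((a - b)/2) (by linarith)
  linarith

end StmtAux

open StmtAux

theorem stmt2 (ax bx ay bY : ℝ) (hx : ax < bx) (hy : ay < bY)
    (Ω : Set (ℝ × ℝ)) (hΩ : Ω = Ioo ax bx ×ˢ Ioo ay bY)
    (u : ℝ × ℝ → ℝ) (hu1 : IntegrableOn u Ω) (huBV : BV2 u Ω)
    (v : ℝ → ℝ) (hv : ∀ x, v x = ∫ y in Ioo ay bY, u (x, y)) :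
    IntegrableOn v (Ioo ax bx) ∧ BV1 v ax bx ∧
    TV1 v ax bx ≤ ∫ y in Ioo ay bY, TV1 (fun x => u (x, y)) ax bx ∧
    (∫ y in Ioo ay bY, TV1 (fun x => u (x, y)) ax bx) ≤ TV2 u Ω := by
  classical
  subst hΩ
  set s : Set ℝ := Ioo ax bx with hs
  set t : Set ℝ := Ioo ay bY with ht
  set μ : Measure ℝ := volume.restrict s with hμ
  set ν : Measure ℝ := volume.restrict t with hν
  have hres : μ.prod ν = (volume : Measure (ℝ × ℝ)).restrict (s ×ˢ t) := by
    rw [hμ, hν, Measure.prod_restrict, ← Measure.volume_eq_prod]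
  have hu2 : Integrable u (μ.prod ν) := by
    rw [hres]; exact hu1
  -- `0` belongs to the 2D test set, so `TV2 ≥ 0`
  have hTV2mem0 : (0:ℝ) ∈ {r : ℝ | ∃ ψ, IsTestVF (s ×ˢ t) ψ ∧
      r = ∫ p in s ×ˢ t, u p * div2 ψ p} := by
    refine ⟨fun _ => (0:ℝ×ℝ), ⟨contDiff_const, ?_, ?_, fun p => by simp⟩, ?_⟩
    · have : tsupport (fun _ : ℝ×ℝ => (0:ℝ×ℝ)) = ∅ := by
        simp [tsupport, Function.support]
      rw [HasCompactSupport, this]; exact isCompact_empty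
    · have : tsupport (fun _ : ℝ×ℝ => (0:ℝ×ℝ)) = ∅ := by
        simp [tsupport, Function.support]
      rw [this]; exact empty_subset _
    · have hz : ∀ p, div2 (fun _ : ℝ×ℝ => (0:ℝ×ℝ)) p = 0 := by
        intro p; rw [div2, fderiv_fun_const]; simp
      symm
      rw [setIntegral_congr_fun (measurableSet_Ioo.prod measurableSet_Ioo)
        (fun p _ => by rw [hz p, mul_zero])]
      simp
  have hTV2nonneg : 0 ≤ TV2 u (s ×ˢ t) := le_csSup huBV hTV2mem0
  obtain ⟨e, heAdm, he0, hedense⟩ := exists_dense_seq ax bx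
  -- integrability of `u p * deriv ψ p.1` on the product
  have hIψ : ∀ ψ : ℝ → ℝ, Adm ax bx ψ →
      Integrable (fun p : ℝ × ℝ => u p * deriv ψ p.1) (μ.prod ν) := by
    intro ψ hψ
    obtain ⟨C, hC0, hC⟩ := adm_deriv_bound hψ
    refine (hu2.bdd_mul (((adm_deriv_cont hψ).comp continuous_fst).aestronglyMeasurable)
      (c := C) (Eventually.of_forall fun p => by simpa [Real.norm_eq_abs] using hC p.1)).congr ?_
    exact Eventually.of_forall fun p => mul_comm _ _
  set g : ℕ → ℝ → ℝ := fun n y => ∫ x, u (x, y) * deriv (e n) x ∂μ with hgdef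
  have hgInt : ∀ n, Integrable (g n) ν := fun n => (hIψ (e n) (heAdm n)).integral_prod_right
  have hgψInt : ∀ ψ, Adm ax bx ψ →
      Integrable (fun y => ∫ x, u (x, y) * deriv ψ x ∂μ) ν :=
    fun ψ hψ => (hIψ ψ hψ).integral_prod_right
  set h0 : ℝ → ℝ := fun y => ∫ x, |u (x, y)| ∂μ with hh0def
  have hh0Int : Integrable h0 ν := by
    have := hu2.integral_norm_prod_right
    simpa [Real.norm_eq_abs] using this
  have hh0nonneg : ∀ y, 0 ≤ h0 y := fun y => integral_nonneg fun x => abs_nonneg _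
  have hslice : ∀ᵐ y ∂ν, Integrable (fun x => u (x, y)) μ := hu2.prod_left_ae
  -- uniform bound on `∫ x, u (x,y) * deriv ψ x`
  have hbound : ∀ ψ : ℝ → ℝ, Adm ax bx ψ → ∀ C : ℝ, (∀ x, |deriv ψ x| ≤ C) →
      ∀ y : ℝ, Integrable (fun x => u (x, y)) μ →
        |∫ x, u (x, y) * deriv ψ x ∂μ| ≤ C * h0 y := by
    intro ψ hψ C hC y hy
    have hC0 : 0 ≤ C := le_trans (abs_nonneg _) (hC 0)
    have h1 : Integrable (fun x => u (x, y) * deriv ψ x) μ :=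
      (hy.bdd_mul (((adm_deriv_cont hψ).aestronglyMeasurable))
        (c := C) (Eventually.of_forall fun x => by simpa [Real.norm_eq_abs] using hC x)).congr
        (Eventually.of_forall fun x => mul_comm _ _)
    calc |∫ x, u (x, y) * deriv ψ x ∂μ| ≤ ∫ x, |u (x, y)| * |deriv ψ x| ∂μ := by
          simpa [Real.norm_eq_abs, abs_mul] using norm_integral_le_integral_norm
            (fun x => u (x, y) * deriv ψ x) (μ := μ)
      _ ≤ ∫ x, C * |u (x, y)| ∂μ := by
          refine integral_mono
            (h1.abs.congr (Eventually.of_forall fun x => (abs_mul _ _)))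
            (hy.abs.const_mul C) fun x => ?_
          calc |u (x, y)| * |deriv ψ x| ≤ |u (x, y)| * C :=
                mul_le_mul_of_nonneg_left (hC x) (abs_nonneg _)
            _ = C * |u (x, y)| := mul_comm _ _
      _ = C * h0 y := integral_const_mul C _
  -- approximation by the dense sequence
  have happrox : ∀ y : ℝ, Integrable (fun x => u (x, y)) μ → ∀ ψ, Adm ax bx ψ →
      ∀ ε : ℝ, 0 < ε → ∃ n, (∫ x, u (x, y) * deriv ψ x ∂μ) ≤ g n y + ε * h0 y := by
    intro y hy ψ hψ ε hε
    obtain ⟨n, hn⟩ := hedense ψ hψ ε hε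
    refine ⟨n, ?_⟩
    have hint1 : Integrable (fun x => u (x, y) * deriv ψ x) μ := by
      obtain ⟨C, hC0, hC⟩ := adm_deriv_bound hψ
      exact (hy.bdd_mul ((adm_deriv_cont hψ).aestronglyMeasurable)
        (c := C) (Eventually.of_forall fun x => by simpa [Real.norm_eq_abs] using hC x)).congr
        (Eventually.of_forall fun x => mul_comm _ _)
    have hint2 : Integrable (fun x => u (x, y) * deriv (e n) x) μ := by
      obtain ⟨C, hC0, hC⟩ := adm_deriv_bound (heAdm n)
      exact (hy.bdd_mul ((adm_deriv_cont (heAdm n)).aestronglyMeasurable)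
        (c := C) (Eventually.of_forall fun x => by simpa [Real.norm_eq_abs] using hC x)).congr
        (Eventually.of_forall fun x => mul_comm _ _)
    have hdiff : (∫ x, u (x, y) * deriv ψ x ∂μ) - g n y
        = ∫ x, u (x, y) * (deriv ψ x - deriv (e n) x) ∂μ := by
      rw [hgdef, ← integral_sub hint1 hint2]
      congr 1; funext x; ring
    have hint3 : Integrable (fun x => u (x, y) * (deriv ψ x - deriv (e n) x)) μ :=
      (hint1.sub hint2).congr (Eventually.of_forall fun x => by
        simp only [Pi.sub_apply]; ring)
    have hb : (∫ x, u (x, y) * (deriv ψ x - deriv (e n) x) ∂μ) ≤ ε * h0 y := by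
      calc (∫ x, u (x, y) * (deriv ψ x - deriv (e n) x) ∂μ)
          ≤ ∫ x, |u (x, y)| * ε ∂μ := by
            refine integral_mono hint3 (hy.abs.mul_const ε) fun x => ?_
            refine le_trans (le_abs_self _) ?_
            rw [abs_mul]
            exact mul_le_mul_of_nonneg_left (hn x) (abs_nonneg _)
      _ = ε * h0 y := by rw [integral_mul_const]; ring
    linarith [hdiff ▸ hb]
  -- measurable modifications of the `g n`
  set g' : ℕ → ℝ → ℝ := fun n => ((hgInt n).aestronglyMeasurable).mk (g n) with hg'def
  have hg'meas : ∀ n, Measurable (g' n) := fun n =>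
    ((hgInt n).aestronglyMeasurable).stronglyMeasurable_mk.measurable
  have hgg' : ∀ n, g n =ᵐ[ν] g' n := fun n => ((hgInt n).aestronglyMeasurable).ae_eq_mk
  have hg'Int : ∀ n, Integrable (g' n) ν := fun n => (hgInt n).congr (hgg' n)
  -- `M N = max (g' 0, ..., g' N)`
  set M : ℕ → ℝ → ℝ :=
    fun N => Nat.rec (g' 0) (fun k Mk => fun y => max (Mk y) (g' (k+1) y)) N with hMdef
  have hMsucc : ∀ N y, M (N+1) y = max (M N y) (g' (N+1) y) := fun _ _ => rfl
  have hMmeas : ∀ N, Measurable (M N) := by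
    intro N
    induction N with
    | zero => exact hg'meas 0
    | succ k ih => exact Measurable.max ih (hg'meas (k+1))
  have hMInt : ∀ N, Integrable (M N) ν := by
    intro N
    induction N with
    | zero => exact hg'Int 0
    | succ k ih =>
      have := ih.sup (hg'Int (k+1))
      exact this.congr (Eventually.of_forall fun y => rfl)
  have hMle : ∀ N n, n ≤ N → ∀ y, g' n y ≤ M N y := by
    intro N
    induction N with
    | zero => intro n hn y; interval_cases n; exact le_rfl
    | succ k ih =>
      intro n hn y
      rcases Nat.lt_or_ge n (k+1) with h | h
      · exact le_trans (ih n (Nat.lt_succ_iff.mp h) y) (le_max_left _ _)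
      · have : n = k + 1 := le_antisymm hn h
        subst this
        exact le_max_right _ _
  have hMex : ∀ N y, ∃ n, n ≤ N ∧ M N y = g' n y := by
    intro N
    induction N with
    | zero => exact fun y => ⟨0, le_rfl, rfl⟩
    | succ k ih =>
      intro y
      rcases max_cases (M k y) (g' (k+1) y) with ⟨hmax, _⟩ | ⟨hmax, _⟩
      · obtain ⟨n, hn, hny⟩ := ih y
        exact ⟨n, hn.trans (Nat.le_succ _), by rw [hMsucc, hmax, hny]⟩
      · exact ⟨k+1, le_rfl, by rw [hMsucc, hmax]⟩
  have hMmono : ∀ N y, M N y ≤ M (N+1) y := fun N y => le_max_left _ _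
  have hg0 : ∀ y, g 0 y = 0 := by
    intro y
    have hd : ∀ x, deriv (e 0) x = 0 := by
      intro x; rw [he0]; exact deriv_const _ _
    calc g 0 y = ∫ x, u (x, y) * deriv (e 0) x ∂μ := rfl
      _ = 0 := by simp [hd]
  have hMnonneg : ∀ N, 0 ≤ᵐ[ν] M N := by
    intro N
    filter_upwards [hgg' 0] with y h0y
    have h1 : g' 0 y ≤ M N y := hMle N 0 (Nat.zero_le N) y
    rw [← h0y, hg0 y] at h1
    exact h1
  -- THE CRUX
  have hcrux : ∀ N : ℕ, ∫ y, M N y ∂ν ≤ TV2 u (s ×ˢ t) := by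
    intro N
    refine le_add_of_forall_pos fun ε hε => ?_
    -- the partition of `t` according to the first maximizer among `g' 0 .. g' N`
    set A : ℕ → Set ℝ := fun n => t ∩ ({y | g' n y = M N y} ∩
      ⋂ m ∈ Finset.range n, {y | g' m y = M N y}ᶜ) with hAdef
    have hAmeas : ∀ n, MeasurableSet (A n) := by
      intro n
      refine measurableSet_Ioo.inter (MeasurableSet.inter ?_ ?_)
      · exact measurableSet_eq_fun (hg'meas n) (hMmeas N)
      · exact Finset.measurableSet_biInter _ fun m _ =>
          (measurableSet_eq_fun (hg'meas m) (hMmeas N)).compl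
    have hAsub : ∀ n, A n ⊆ t := fun n => inter_subset_left
    have hAdisjlt : ∀ m n, m < n → Disjoint (A m) (A n) := by
      intro m n hmn
      rw [Set.disjoint_left]
      rintro y ⟨-, hyeq, -⟩ ⟨-, -, hyn⟩
      have := Set.mem_iInter₂.mp hyn m (Finset.mem_range.mpr hmn)
      exact this hyeq
    have hAdisj : ∀ m n, m ≠ n → Disjoint (A m) (A n) := by
      intro m n hne
      rcases hne.lt_or_gt with h | h
      · exact hAdisjlt m n h
      · exact (hAdisjlt n m h).symm
    have hAcover : t = ⋃ n ∈ Finset.range (N+1), A n := by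
      apply Subset.antisymm
      · intro y hyt
        obtain ⟨k, hkN, hk⟩ := hMex N y
        have hex : ∃ m, g' m y = M N y := ⟨k, hk.symm⟩
        have hn0le : Nat.find hex ≤ N := le_trans (Nat.find_min' hex hk.symm) hkN
        refine Set.mem_iUnion₂.mpr ⟨Nat.find hex,
          Finset.mem_range.mpr (Nat.lt_succ_of_le hn0le), hyt, Nat.find_spec hex, ?_⟩
        exact Set.mem_iInter₂.mpr fun m hm =>
          Nat.find_min hex (Finset.mem_range.mp hm)
      · exact Set.iUnion₂_subset fun n _ => hAsub n
    -- a uniform bound on the derivatives of `e 0 .. e N`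
    obtain ⟨C, hC0, hCb⟩ : ∃ C : ℝ, 0 ≤ C ∧
        ∀ n ∈ Finset.range (N+1), ∀ x, |deriv (e n) x| ≤ C := by
      choose Cf hCf0 hCf using fun n => adm_deriv_bound (heAdm n)
      refine ⟨∑ m ∈ Finset.range (N+1), Cf m,
        Finset.sum_nonneg fun m _ => hCf0 m, fun n hn x => ?_⟩
      exact (hCf n x).trans (Finset.single_le_sum (fun m _ => hCf0 m) hn)
    -- absolute continuity of the integral of `h0`
    have hfin : ∫⁻ y, (‖h0 y‖₊ : ℝ≥0∞) ∂ν ≠ ⊤ := hh0Int.2.ne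
    set ε₁ : ℝ := ε / (N + 1) with hε₁def
    have hε₁pos : 0 < ε₁ := by positivity
    have hC1pos : (0:ℝ) < C + 1 := by linarith
    have hε₂ne : ENNReal.ofReal (ε₁ / (C + 1)) ≠ 0 :=
      (ENNReal.ofReal_pos.mpr (by positivity)).ne'
    obtain ⟨δ, hδpos, hδ⟩ := exists_pos_setLIntegral_lt_of_measure_lt hfin hε₂ne
    have hδ2 : δ / 2 ≠ 0 := (ENNReal.half_pos hδpos.ne').ne'
    have hAfin : ∀ n, volume (A n) ≠ ⊤ := by
      intro n
      have h1 : volume (A n) ≤ volume t := measure_mono (hAsub n)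
      have h2 : volume t < ⊤ := by rw [ht, Real.volume_Ioo]; exact ENNReal.ofReal_lt_top
      exact (lt_of_le_of_lt h1 h2).ne
    -- compact subsets of the pieces
    have hcompex : ∀ n, ∃ Kn, Kn ⊆ A n ∧ IsCompact Kn ∧ volume (A n \ Kn) < δ/2 := by
      intro n
      obtain ⟨Kn, hKA, hKc, hKlt⟩ := (hAmeas n).exists_isCompact_lt_add (hAfin n) hδ2
      refine ⟨Kn, hKA, hKc, measure_diff_lt_of_lt_add hKc.measurableSet.nullMeasurableSet hKA
        (ne_of_lt (lt_of_le_of_lt (measure_mono hKA)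
          (lt_top_iff_ne_top.mpr (hAfin n)))) hKlt⟩
    choose K hKA hKcomp hKsmall using hcompex
    have hKfin : ∀ n, volume (K n) ≠ ⊤ := fun n =>
      ne_of_lt (lt_of_le_of_lt (measure_mono (hKA n)) (lt_top_iff_ne_top.mpr (hAfin n)))
    -- small open neighborhoods
    have hopenex : ∀ n, ∃ On, IsOpen On ∧ K n ⊆ On ∧ volume (On \ K n) < δ/2 := by
      intro n
      obtain ⟨On, hKO, hOopen, hOlt⟩ := Set.exists_isOpen_lt_add (K n) (hKfin n) hδ2
      exact ⟨On, hOopen, hKO, measure_diff_lt_of_lt_add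
        (hKcomp n).measurableSet.nullMeasurableSet hKO (hKfin n) hOlt⟩
    choose O hOopen hKO hOsmall using hopenex
    -- pairwise disjoint open neighborhoods via `infEdist`
    set Kc : ℕ → Set ℝ := fun n => ⋃ m ∈ (Finset.range (N+1)).erase n, K m with hKcdef
    have hKcclosed : ∀ n, IsClosed (Kc n) := fun n =>
      Set.Finite.isClosed_biUnion (Finset.finite_toSet _) fun m _ => (hKcomp m).isClosed
    set W : ℕ → Set ℝ :=
      fun n => {y | EMetric.infEdist y (K n) < EMetric.infEdist y (Kc n)} with hWdef
    have hWopen : ∀ n, IsOpen (W n) :=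
      fun n => isOpen_lt EMetric.continuous_infEdist EMetric.continuous_infEdist
    have hKW : ∀ n, K n ⊆ W n := by
      intro n y hy
      have h1 : EMetric.infEdist y (K n) = 0 := EMetric.infEdist_zero_of_mem hy
      have h2 : y ∉ Kc n := by
        intro hc
        obtain ⟨m, hm, hym⟩ := Set.mem_iUnion₂.mp hc
        have hmne : m ≠ n := (Finset.mem_erase.mp hm).1
        exact Set.disjoint_left.mp (hAdisj m n hmne) (hKA m hym) (hKA n hy)
      have h3 : 0 < EMetric.infEdist y (Kc n) := by
        exact EMetric.infEdist_pos_iff_notMem_closure.mpr (by rwa [(hKcclosed n).closure_eq])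
      show EMetric.infEdist y (K n) < EMetric.infEdist y (Kc n)
      rw [h1]; exact h3
    have hWdisj : ∀ m ∈ Finset.range (N+1), ∀ n ∈ Finset.range (N+1), m ≠ n →
        Disjoint (W m) (W n) := by
      intro m hm n hn hne
      rw [Set.disjoint_left]
      intro y hym hyn
      have hym' : EMetric.infEdist y (K m) < EMetric.infEdist y (Kc m) := hym
      have hyn' : EMetric.infEdist y (K n) < EMetric.infEdist y (Kc n) := hyn
      have h1 : EMetric.infEdist y (Kc m) ≤ EMetric.infEdist y (K n) :=
        EMetric.infEdist_anti (Set.subset_biUnion_of_mem (Finset.mem_erase.mpr ⟨hne.symm, hn⟩))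
      have h2 : EMetric.infEdist y (Kc n) ≤ EMetric.infEdist y (K m) :=
        EMetric.infEdist_anti (Set.subset_biUnion_of_mem (Finset.mem_erase.mpr ⟨hne, hm⟩))
      exact lt_irrefl _ (lt_trans (lt_of_lt_of_le hym' h1) (lt_of_lt_of_le hyn' h2))
    -- compacts between `K n` and `t`
    have hbetween : ∀ n, ∃ Ln, IsCompact Ln ∧ K n ⊆ interior Ln ∧ Ln ⊆ t :=
      fun n => exists_compact_between (hKcomp n) isOpen_Ioo ((hKA n).trans (hAsub n))
    choose L hLcomp hKL hLt using hbetween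
    set V : ℕ → Set ℝ := fun n => O n ∩ (W n ∩ interior (L n)) with hVdef
    have hVopen : ∀ n, IsOpen (V n) := fun n =>
      (hOopen n).inter ((hWopen n).inter isOpen_interior)
    have hKV : ∀ n, K n ⊆ V n :=
      fun n => subset_inter (hKO n) (subset_inter (hKW n) (hKL n))
    have hVW : ∀ n, V n ⊆ W n := fun n => inter_subset_right.trans inter_subset_left
    have hVt : ∀ n, V n ⊆ t := fun n y hy => (hLt n) (interior_subset hy.2.2)
    have hVsmall : ∀ n, volume (V n \ K n) < δ/2 := fun n =>
      lt_of_le_of_lt (measure_mono (diff_subset_diff_left inter_subset_left)) (hOsmall n)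
    -- smooth cutoffs
    have hcut : ∀ n, ∃ ηn : ℝ → ℝ, ContDiff ℝ 1 ηn ∧ HasCompactSupport ηn ∧
        tsupport ηn ⊆ V n ∧ Set.EqOn ηn 1 (K n) ∧ ∀ y, ηn y ∈ Set.Icc (0:ℝ) 1 :=
      fun n => exists_cutoff (hKcomp n) (hVopen n) (hKV n)
    choose η hηcd hηcs hηsupp hηK hη01 using hcut
    have hηsupport : ∀ n, Function.support (η n) ⊆ V n :=
      fun n => (subset_tsupport _).trans (hηsupp n)
    have hηnonneg : ∀ n y, 0 ≤ η n y := fun n y => (hη01 n y).1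
    -- the test vector field
    set Ψ : ℝ × ℝ → ℝ × ℝ :=
      fun q => (∑ n ∈ Finset.range (N+1), e n q.1 * η n q.2, (0:ℝ)) with hΨdef
    have hsumle : ∀ y, (∑ n ∈ Finset.range (N+1), η n y) ≤ 1 := by
      intro y
      by_cases hex : ∃ n₀ ∈ Finset.range (N+1), η n₀ y ≠ 0
      · obtain ⟨n₀, hn₀, hηn₀⟩ := hex
        rw [Finset.sum_eq_single n₀ ?_ (fun h => absurd hn₀ h)]
        · exact (hη01 n₀ y).2
        · intro m hm hmne
          by_contra hmz
          have hyW : y ∈ W m := hVW m (hηsupport m hmz)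
          have hyW0 : y ∈ W n₀ := hVW n₀ (hηsupport n₀ hηn₀)
          exact Set.disjoint_left.mp (hWdisj m hm n₀ hn₀ hmne) hyW hyW0
      · push_neg at hex
        rw [Finset.sum_eq_zero hex]
        exact zero_le_one
    set Z : Set (ℝ × ℝ) :=
      ⋃ n ∈ Finset.range (N+1), (tsupport (e n) ×ˢ tsupport (η n)) with hZdef
    have hZcomp : IsCompact Z :=
      (Finset.range (N+1)).finite_toSet.isCompact_biUnion fun n _ =>
        IsCompact.prod ((heAdm n).2.1) (hηcs n)
    have hsuppΨ : Function.support Ψ ⊆ Z := by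
      intro p hp
      have hp1 : (∑ n ∈ Finset.range (N+1), e n p.1 * η n p.2) ≠ 0 := by
        intro h0z
        apply hp
        show Ψ p = 0
        rw [hΨdef]
        simp only [h0z]
        rfl
      obtain ⟨n, hn, hterm⟩ := Finset.exists_ne_zero_of_sum_ne_zero hp1
      exact Set.mem_iUnion₂.mpr ⟨n, hn,
        subset_tsupport _ (left_ne_zero_of_mul hterm),
        subset_tsupport _ (right_ne_zero_of_mul hterm)⟩
    have htsuppΨ : tsupport Ψ ⊆ Z := hZcomp.isClosed.closure_subset_iff.mpr hsuppΨ
    have hΨtest : IsTestVF (s ×ˢ t) Ψ := by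
      refine ⟨?_, ?_, ?_, ?_⟩
      · exact contDiff_sum_prod _ _ _ (fun n _ => (heAdm n).1) (fun n _ => hηcd n)
      · exact hZcomp.of_isClosed_subset (isClosed_tsupport _) htsuppΨ
      · refine htsuppΨ.trans (Set.iUnion₂_subset fun n _ => ?_)
        exact Set.prod_mono ((heAdm n).2.2.1) ((hηsupp n).trans (hVt n))
      · intro p
        have hshow : Ψ p = (∑ n ∈ Finset.range (N+1), e n p.1 * η n p.2, (0:ℝ)) := rfl
        rw [hshow, norm_prod_le_iff]
        constructor
        · show ‖∑ n ∈ Finset.range (N+1), e n p.1 * η n p.2‖ ≤ 1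
          rw [Real.norm_eq_abs]
          refine le_trans (Finset.abs_sum_le_sum_abs _ _) ?_
          refine le_trans (Finset.sum_le_sum fun n hn => ?_) (hsumle p.2)
          rw [abs_mul]
          calc |e n p.1| * |η n p.2| ≤ 1 * |η n p.2| :=
                mul_le_mul_of_nonneg_right ((heAdm n).2.2.2 p.1) (abs_nonneg _)
            _ = η n p.2 := by rw [one_mul, abs_of_nonneg (hηnonneg n p.2)]
        · show ‖(0:ℝ)‖ ≤ 1
          simp
    have hr0mem : (∫ p, u p * div2 Ψ p ∂(μ.prod ν)) ∈ {r : ℝ | ∃ ψ, IsTestVF (s ×ˢ t) ψ ∧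
        r = ∫ p in s ×ˢ t, u p * div2 ψ p} := by
      refine ⟨Ψ, hΨtest, ?_⟩
      rw [← hres]
    -- expand the test integral
    have hterm_int : ∀ n ∈ Finset.range (N+1),
        Integrable (fun p : ℝ × ℝ => u p * (deriv (e n) p.1 * η n p.2)) (μ.prod ν) := by
      intro n hn
      have hcont : Continuous fun p : ℝ × ℝ => deriv (e n) p.1 * η n p.2 :=
        ((adm_deriv_cont (heAdm n)).comp continuous_fst).mul
          ((hηcd n).continuous.comp continuous_snd)
      refine (hu2.bdd_mul hcont.aestronglyMeasurable (c := C) (Eventually.of_forall fun p => ?_)).congr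
        (Eventually.of_forall fun p => mul_comm _ _)
      rw [Real.norm_eq_abs, abs_mul]
      calc |deriv (e n) p.1| * |η n p.2| ≤ C * 1 := by
            refine mul_le_mul (hCb n hn p.1) ?_ (abs_nonneg _) hC0
            rw [abs_of_nonneg (hηnonneg n p.2)]
            exact (hη01 n p.2).2
        _ = C := mul_one C
    have hr0 : (∫ p, u p * div2 Ψ p ∂(μ.prod ν))
        = ∑ n ∈ Finset.range (N+1), ∫ y, g n y * η n y ∂ν := by
      have h1 : ∀ p : ℝ × ℝ, u p * div2 Ψ p
          = ∑ n ∈ Finset.range (N+1), u p * (deriv (e n) p.1 * η n p.2) := by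
        intro p
        rw [hΨdef, div2_sum_prod _ _ _ (fun n _ => (heAdm n).1) (fun n _ => hηcd n) p,
          Finset.mul_sum]
      rw [integral_congr_ae (Eventually.of_forall h1),
        integral_finset_sum _ hterm_int]
      refine Finset.sum_congr rfl fun n hn => ?_
      rw [integral_prod_symm _ (hterm_int n hn)]
      refine integral_congr_ae (Eventually.of_forall fun y => ?_)
      calc (∫ x, u (x, y) * (deriv (e n) x * η n y) ∂μ)
          = ∫ x, (u (x, y) * deriv (e n) x) * η n y ∂μ :=
            integral_congr_ae (Eventually.of_forall fun x => by ring)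
        _ = g n y * η n y := integral_mul_const _ _
    -- decompose the integral of `M N` over the partition
    have hLHS : ∫ y, M N y ∂ν = ∑ n ∈ Finset.range (N+1), ∫ y in A n, g n y ∂volume := by
      have h1 : ∫ y, M N y ∂ν = ∫ y in ⋃ n ∈ Finset.range (N+1), A n, M N y ∂volume := by
        rw [hν, hAcover]
      rw [h1, integral_biUnion_finset (Finset.range (N+1)) (fun n _ => hAmeas n)
        (fun m _ n _ hmn => hAdisj m n hmn)
        (fun n _ => by
          have hI : Integrable (M N) (volume.restrict t) := by rw [← hν]; exact hMInt N
          exact IntegrableOn.mono_set hI (hAsub n))]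
      refine Finset.sum_congr rfl fun n hn => ?_
      have h2 : ∫ y in A n, M N y ∂volume = ∫ y in A n, g' n y ∂volume :=
        setIntegral_congr_fun (hAmeas n) fun y hy => hy.2.1.symm
      have h3 : ∫ y in A n, g' n y ∂volume = ∫ y in A n, g n y ∂volume :=
        integral_congr_ae (ae_restrict_of_ae_restrict_of_subset (hAsub n) ((hgg' n).symm))
      rw [h2, h3]
    -- per piece estimate
    have hest : ∀ n ∈ Finset.range (N+1),
        ∫ y in A n, g n y ∂volume ≤ (∫ y, g n y * η n y ∂ν) + ε₁ := by
      intro n hn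
      have hAr : ν.restrict (A n) = volume.restrict (A n) := by
        rw [hν, Measure.restrict_restrict (hAmeas n), inter_eq_left.mpr (hAsub n)]
      have hAν : ∫ y in A n, g n y ∂volume = ∫ y, Set.indicator (A n) (g n) y ∂ν := by
        rw [← hAr, ← integral_indicator (hAmeas n)]
      have hgη_int : Integrable (fun y => g n y * η n y) ν := by
        refine ((hgInt n).bdd_mul ((hηcd n).continuous.aestronglyMeasurable)
          (c := 1) (Eventually.of_forall fun y => ?_)).congr (Eventually.of_forall fun y => mul_comm _ _)
        rw [Real.norm_eq_abs, abs_of_nonneg (hηnonneg n y)]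
        exact (hη01 n y).2
      have hind_int : Integrable (Set.indicator (A n) (g n)) ν :=
        (hgInt n).indicator (hAmeas n)
      set B : Set ℝ := (A n ∪ V n) \ K n with hBdef
      have hBmeas : MeasurableSet B :=
        ((hAmeas n).union (hVopen n).measurableSet).diff (hKcomp n).measurableSet
      have hBν : ν B < δ := by
        have h1 : ν B ≤ volume B := by
          rw [hν, Measure.restrict_apply hBmeas]
          exact measure_mono inter_subset_left
        have h2 : volume B ≤ volume (A n \ K n) + volume (V n \ K n) := by
          refine le_trans (measure_mono (subset_of_eq ?_)) (measure_union_le _ _)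
          rw [hBdef, union_diff_distrib]
        calc ν B ≤ volume (A n \ K n) + volume (V n \ K n) := le_trans h1 h2
          _ < δ/2 + δ/2 := ENNReal.add_lt_add (hKsmall n) (hVsmall n)
          _ = δ := ENNReal.add_halves δ
      have hlintB : ∫⁻ y in B, (‖h0 y‖₊ : ℝ≥0∞) ∂ν < ENNReal.ofReal (ε₁ / (C+1)) := hδ B hBν
      have hhB : ∫ y in B, h0 y ∂ν ≤ ε₁ / (C + 1) := by
        have h2 : ∫ y in B, h0 y ∂ν ≤ (∫⁻ y in B, (‖h0 y‖₊ : ℝ≥0∞) ∂ν).toReal := by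
          rw [integral_eq_lintegral_of_nonneg_ae (Eventually.of_forall fun y => hh0nonneg y)
            hh0Int.aestronglyMeasurable.restrict]
          refine ENNReal.toReal_mono (ne_top_of_lt hlintB) (lintegral_mono fun y => ?_)
          exact (Real.enorm_eq_ofReal (hh0nonneg y)).symm.le
        calc ∫ y in B, h0 y ∂ν ≤ (∫⁻ y in B, (‖h0 y‖₊ : ℝ≥0∞) ∂ν).toReal := h2
          _ ≤ ε₁ / (C + 1) := by
              rw [← ENNReal.toReal_ofReal (le_of_lt (div_pos hε₁pos hC1pos))]
              exact ENNReal.toReal_mono ENNReal.ofReal_ne_top hlintB.le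
      have hptwise : ∀ᵐ y ∂ν, |Set.indicator (A n) (g n) y - g n y * η n y|
          ≤ Set.indicator B (fun z => C * h0 z) y := by
        filter_upwards [hslice] with y hy
        have hgb : |g n y| ≤ C * h0 y := hbound (e n) (heAdm n) C (fun x => hCb n hn x) y hy
        by_cases hyK : y ∈ K n
        · have h1 : Set.indicator (A n) (g n) y = g n y := indicator_of_mem (hKA n hyK) _
          have h2 : η n y = 1 := hηK n hyK
          rw [h1, h2, mul_one, sub_self, abs_zero]
          exact indicator_nonneg (fun z _ => mul_nonneg hC0 (hh0nonneg z)) y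
        · by_cases hyAV : y ∈ A n ∪ V n
          · have hyB : y ∈ B := ⟨hyAV, hyK⟩
            rw [indicator_of_mem hyB]
            have hle : |Set.indicator (A n) (g n) y - g n y * η n y| ≤ |g n y| := by
              by_cases hyA : y ∈ A n
              · rw [indicator_of_mem hyA]
                have hrw : g n y - g n y * η n y = g n y * (1 - η n y) := by ring
                rw [hrw, abs_mul]
                refine mul_le_of_le_one_right (abs_nonneg _) ?_
                rw [abs_of_nonneg (by linarith [(hη01 n y).2] : (0:ℝ) ≤ 1 - η n y)]
                linarith [(hη01 n y).1]
              · rw [indicator_of_notMem hyA, zero_sub, abs_neg, abs_mul]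
                refine mul_le_of_le_one_right (abs_nonneg _) ?_
                rw [abs_of_nonneg (hηnonneg n y)]
                exact (hη01 n y).2
            exact hle.trans hgb
          · have h1 : Set.indicator (A n) (g n) y = 0 :=
              indicator_of_notMem (fun hyA => hyAV (Or.inl hyA)) _
            have h2 : η n y = 0 := by
              by_contra hne
              exact hyAV (Or.inr (hηsupport n hne))
            rw [h1, h2, mul_zero, sub_zero, abs_zero]
            exact indicator_nonneg (fun z _ => mul_nonneg hC0 (hh0nonneg z)) y
      have hdiff_int : Integrable (fun y => Set.indicator (A n) (g n) y - g n y * η n y) ν :=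
        hind_int.sub hgη_int
      have hCh0_int : Integrable (Set.indicator B (fun z => C * h0 z)) ν :=
        (hh0Int.const_mul C).indicator hBmeas
      have habs : |∫ y, (Set.indicator (A n) (g n) y - g n y * η n y) ∂ν| ≤ ε₁ := by
        have h1 : |∫ y, (Set.indicator (A n) (g n) y - g n y * η n y) ∂ν|
            ≤ ∫ y, |Set.indicator (A n) (g n) y - g n y * η n y| ∂ν := by
          simpa [Real.norm_eq_abs] using norm_integral_le_integral_norm
            (fun y => Set.indicator (A n) (g n) y - g n y * η n y) (μ := ν)
        have h2 : ∫ y, |Set.indicator (A n) (g n) y - g n y * η n y| ∂ν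
            ≤ ∫ y, Set.indicator B (fun z => C * h0 z) y ∂ν :=
          integral_mono_ae hdiff_int.abs hCh0_int hptwise
        have h3 : ∫ y, Set.indicator B (fun z => C * h0 z) y ∂ν
            = C * ∫ y in B, h0 y ∂ν := by
          rw [integral_indicator hBmeas, integral_const_mul]
        have h4 : C * ∫ y in B, h0 y ∂ν ≤ C * (ε₁ / (C+1)) :=
          mul_le_mul_of_nonneg_left hhB hC0
        have h5 : C * (ε₁ / (C+1)) ≤ ε₁ := by
          rw [mul_div_assoc']
          rw [div_le_iff₀ hC1pos]
          nlinarith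
        linarith
      have hsub : (∫ y, Set.indicator (A n) (g n) y ∂ν) - (∫ y, g n y * η n y ∂ν)
          = ∫ y, (Set.indicator (A n) (g n) y - g n y * η n y) ∂ν :=
        (integral_sub hind_int hgη_int).symm
      rw [hAν]
      linarith [hsub, (abs_le.mp habs).2]
    calc ∫ y, M N y ∂ν
        = ∑ n ∈ Finset.range (N+1), ∫ y in A n, g n y ∂volume := hLHS
      _ ≤ ∑ n ∈ Finset.range (N+1), ((∫ y, g n y * η n y ∂ν) + ε₁) := Finset.sum_le_sum hest
      _ = (∑ n ∈ Finset.range (N+1), ∫ y, g n y * η n y ∂ν) + (N+1 : ℝ) * ε₁ := by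
          rw [Finset.sum_add_distrib, Finset.sum_const, Finset.card_range, nsmul_eq_mul]
          push_cast
          ring
      _ = (∫ p, u p * div2 Ψ p ∂(μ.prod ν)) + ε := by
          rw [hr0, hε₁def]
          congr 1
          field_simp
      _ ≤ TV2 u (s ×ˢ t) + ε := add_le_add_left (le_csSup huBV hr0mem) ε
  -- pass to the limit
  set H : ℝ → ℝ≥0∞ := fun y => ⨆ N, ENNReal.ofReal (M N y) with hHdef
  have hHmeas : Measurable H :=
    Measurable.iSup fun N => (hMmeas N).ennreal_ofReal
  have hHlint : ∫⁻ y, H y ∂ν ≤ ENNReal.ofReal (TV2 u (s ×ˢ t)) := by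
    rw [hHdef]
    rw [lintegral_iSup (fun N => (hMmeas N).ennreal_ofReal)
      (fun N K hNK => ?_)]
    · refine iSup_le fun N => ?_
      rw [← ofReal_integral_eq_lintegral_ofReal (hMInt N) (hMnonneg N)]
      exact ENNReal.ofReal_le_ofReal (hcrux N)
    · intro y
      simp only
      refine ENNReal.ofReal_le_ofReal ?_
      induction hNK with
      | refl => exact le_rfl
      | step h ih => exact le_trans ih (hMmono _ y)
  have hHfin : ∀ᵐ y ∂ν, H y < ⊤ :=
    ae_lt_top hHmeas (lt_of_le_of_lt hHlint ENNReal.ofReal_lt_top).ne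
  set F : ℝ → ℝ := fun y => (H y).toReal with hFdef
  have hFint : Integrable F ν :=
    integrable_toReal_of_lintegral_ne_top hHmeas.aemeasurable
      (lt_of_le_of_lt hHlint ENNReal.ofReal_lt_top).ne
  have hFle : ∫ y, F y ∂ν ≤ TV2 u (s ×ˢ t) := by
    rw [hFdef]
    rw [integral_toReal hHmeas.aemeasurable hHfin]
    calc (∫⁻ y, H y ∂ν).toReal ≤ (ENNReal.ofReal (TV2 u (s ×ˢ t))).toReal :=
          ENNReal.toReal_mono ENNReal.ofReal_ne_top hHlint
      _ = TV2 u (s ×ˢ t) := ENNReal.toReal_ofReal hTV2nonneg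
  have hMleF : ∀ y, H y < ⊤ → ∀ N, M N y ≤ F y := by
    intro y hfin N
    rcases le_or_gt (M N y) 0 with h | h
    · exact le_trans h ENNReal.toReal_nonneg
    · have h1 : ENNReal.ofReal (M N y) ≤ H y := le_iSup (fun N => ENNReal.ofReal (M N y)) N
      have := ENNReal.toReal_mono hfin.ne h1
      rwa [ENNReal.toReal_ofReal h.le] at this
  have hgood : ∀ᵐ y ∂ν, Integrable (fun x => u (x, y)) μ ∧ H y < ⊤ ∧ ∀ n, g n y = g' n y := by
    filter_upwards [hslice, hHfin, ae_all_iff.mpr hgg'] with y hy1 hy2 hy3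
    exact ⟨hy1, hy2, hy3⟩
  -- the key pointwise identification
  have hkey : ∀ y : ℝ, (Integrable (fun x => u (x, y)) μ ∧ H y < ⊤ ∧ ∀ n, g n y = g' n y) →
      (∀ r ∈ TVset (fun x => u (x, y)) ax bx, r ≤ F y) ∧
        TV1 (fun x => u (x, y)) ax bx = F y := by
    intro y ⟨hy1, hy2, hy3⟩
    have hub : ∀ r ∈ TVset (fun x => u (x, y)) ax bx, r ≤ F y := by
      rintro r ⟨ψ, hψ, rfl⟩
      refine le_add_of_forall_pos fun ε hε => ?_
      have hε' : 0 < ε / (h0 y + 1) := by positivity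
      obtain ⟨n, hn⟩ := happrox y hy1 ψ hψ _ hε'
      have hstep : g n y ≤ F y := by
        rw [hy3 n]
        exact le_trans (hMle n n le_rfl y) (hMleF y hy2 n)
      have hh1 : (ε / (h0 y + 1)) * h0 y ≤ ε := by
        rw [div_mul_eq_mul_div, div_le_iff₀ (by linarith [hh0nonneg y])]
        have := hh0nonneg y
        nlinarith
      calc (∫ x in Ioo ax bx, u (x, y) * deriv ψ x) = ∫ x, u (x, y) * deriv ψ x ∂μ := rfl
        _ ≤ g n y + (ε / (h0 y + 1)) * h0 y := hn
        _ ≤ F y + ε := add_le_add hstep hh1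
    refine ⟨hub, ?_⟩
    have hbdd : BddAbove (TVset (fun x => u (x, y)) ax bx) := ⟨F y, hub⟩
    have hne : (TVset (fun x => u (x, y)) ax bx).Nonempty :=
      ⟨0, zero_mem_TVset _ _ _⟩
    have hts : TV1 (fun x => u (x, y)) ax bx = sSup (TVset (fun x => u (x, y)) ax bx) := by
      rw [TV1, TVset_eq]
    have hsSup_nonneg : 0 ≤ sSup (TVset (fun x => u (x, y)) ax bx) :=
      le_csSup hbdd (zero_mem_TVset _ _ _)
    have hlow : F y ≤ sSup (TVset (fun x => u (x, y)) ax bx) := by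
      have h1 : H y ≤ ENNReal.ofReal (sSup (TVset (fun x => u (x, y)) ax bx)) := by
        refine iSup_le fun N => ?_
        obtain ⟨n, hnN, hny⟩ := hMex N y
        refine ENNReal.ofReal_le_ofReal ?_
        rw [hny, ← hy3 n]
        refine le_csSup hbdd ⟨e n, heAdm n, rfl⟩
      have := ENNReal.toReal_mono ENNReal.ofReal_ne_top h1
      rwa [ENNReal.toReal_ofReal hsSup_nonneg] at this
    rw [hts]
    exact le_antisymm (csSup_le hne hub) hlow
  -- the middle quantity equals `∫ F`
  have hmiddle : ∫ y, TV1 (fun x => u (x, y)) ax bx ∂ν = ∫ y, F y ∂ν := by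
    refine integral_congr_ae ?_
    filter_upwards [hgood] with y hy
    exact (hkey y hy).2
  -- Fubini for admissible test functions against `v`
  have hswap : ∀ ψ : ℝ → ℝ, Adm ax bx ψ →
      ∫ x, v x * deriv ψ x ∂μ = ∫ y, (∫ x, u (x, y) * deriv ψ x ∂μ) ∂ν := by
    intro ψ hψ
    have h1 : ∀ x, v x * deriv ψ x = ∫ y, u (x, y) * deriv ψ x ∂ν := by
      intro x
      rw [hv x]
      exact (integral_mul_const _ _).symm
    rw [integral_congr_ae (Eventually.of_forall h1)]
    have h2 : Integrable (Function.uncurry fun x y => u (x, y) * deriv ψ x) (μ.prod ν) := by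
      refine (hIψ ψ hψ).congr (Eventually.of_forall fun p => ?_)
      simp [Function.uncurry]
    exact integral_integral_swap h2
  -- bound for the `v` test integrals
  have hAbound : ∀ r ∈ TVset v ax bx, r ≤ ∫ y, F y ∂ν := by
    rintro r ⟨ψ, hψ, rfl⟩
    have : (∫ x in Ioo ax bx, v x * deriv ψ x) = ∫ x, v x * deriv ψ x ∂μ := rfl
    rw [this, hswap ψ hψ]
    refine integral_mono_ae (hgψInt ψ hψ) hFint ?_
    filter_upwards [hgood] with y hy
    exact (hkey y hy).1 _ ⟨ψ, hψ, rfl⟩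
  have hBV1v : BV1 v ax bx := by
    rw [BV1, TVset_eq]
    exact ⟨_, hAbound⟩
  have hTV1v : TV1 v ax bx ≤ ∫ y, F y ∂ν := by
    rw [TV1, TVset_eq]
    exact csSup_le ⟨0, zero_mem_TVset _ _ _⟩ hAbound
  refine ⟨?_, hBV1v, ?_, ?_⟩
  · exact (hu2.integral_prod_left).congr (Eventually.of_forall fun x => (hv x).symm)
  · rw [hmiddle]; exact hTV1v
  · rw [hmiddle]; exact hFle
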